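/- The coarse entropy of any metric space X is either zero or infinity: h_∞(X) ∈ {0, ∞}. -/

import Mathlib

open Filter Set Metric
open scoped ENNReal

noncomputable section

/-- `p` represents a `δ`-pseudoorbit of `f` of length `n` starting at `x₀`:
`(p 0, p 1, …, p n)` with `p 0 = x₀` and `dist (f (p i)) (p (i+1)) ≤ δ` for `i < n`.
(Only the values `p 0, …, p n` are relevant.) -/
def IsPseudoOrbit {X : Type*} [MetricSpace X] (f : X → X) (δ : ℝ) (n : ℕ) (x₀ : X)
    (p : ℕ → X) : Prop :=
  p 0 = x₀ ∧ ∀ i < n, dist (f (p i)) (p (i + 1)) ≤ δ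

/-- The distance between two pseudoorbits of length `n`:
the maximum of `dist (p i) (q i)` over `0 ≤ i ≤ n`. -/
def orbitDist {X : Type*} [MetricSpace X] (n : ℕ) (p q : ℕ → X) : ℝ :=
  (Finset.range (n + 1)).sup' (by simp) fun i => dist (p i) (q i)

/-- A family `S` of pseudoorbits of length `n` is `R`-separated if any two distinct
members are at pseudoorbit distance at least `R`. -/
def IsSepFamily {X : Type*} [MetricSpace X] (n : ℕ) (R : ℝ) (S : Set (ℕ → X)) : Prop :=
  ∀ p ∈ S, ∀ q ∈ S, p ≠ q → R ≤ orbitDist n p q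

/-- `sepCard f n R δ x₀` is `s(f,n,R,δ,x₀)`: the supremum of cardinalities of
`R`-separated sets of `δ`-pseudoorbits of `f` of length `n` starting at `x₀`. -/
def sepCard {X : Type*} [MetricSpace X] (f : X → X) (n : ℕ) (R δ : ℝ) (x₀ : X) : ℝ≥0∞ :=
  ⨆ (S : Set (ℕ → X)) (_ : ∀ p ∈ S, IsPseudoOrbit f δ n x₀ p) (_ : IsSepFamily n R S),
    (S.encard : ℝ≥0∞)

/-- Extended logarithm `[0,∞] → [0,∞]` (negative values are truncated to `0`). -/
def elog (x : ℝ≥0∞) : ℝ≥0∞ :=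
  if x = ⊤ then ⊤ else ENNReal.ofReal (Real.log x.toReal)

/-- The coarse entropy of `f : X → X` computed at the basepoint `x₀`:
`h_∞(f) = lim_{δ→∞} lim_{R→∞} limsup_{n→∞} (1/n) log s(f,n,R,δ,x₀)`.
Since `s` is nondecreasing in `δ` and nonincreasing in `R`, the limits in `δ` and `R`
are the supremum over `δ > 0` and the infimum over `R > 0`, respectively. -/
def coarseEntropyAt {X : Type*} [MetricSpace X] (f : X → X) (x₀ : X) : ℝ≥0∞ :=
  ⨆ (δ : ℝ) (_ : 0 < δ), ⨅ (R : ℝ) (_ : 0 < R),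
    Filter.atTop.limsup fun n : ℕ => elog (sepCard f n R δ x₀) / (n : ℝ≥0∞)

end

section Aux
variable {X : Type*} [MetricSpace X]

private lemma orbitDist_self (n : ℕ) (p : ℕ → X) : orbitDist n p p = 0 := by
  simp [orbitDist]

private lemma elog_mono : Monotone elog := by
  intro x y h
  unfold elog
  by_cases hy : y = ⊤
  · simp [hy]
  have hx : x ≠ ⊤ := fun hx => hy (top_le_iff.mp (hx ▸ h))
  rw [if_neg hx, if_neg hy]
  rcases le_or_gt x.toReal 1 with h1 | h1
  · have : Real.log x.toReal ≤ 0 := Real.log_nonpos ENNReal.toReal_nonneg h1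
    simp [ENNReal.ofReal_eq_zero.mpr this]
  · exact ENNReal.ofReal_le_ofReal
      (Real.log_le_log (lt_trans one_pos h1) (ENNReal.toReal_mono hy h))

private lemma sepCard_map_le {f g : X → X} {n m : ℕ} {R R' δ δ' : ℝ} {x₀ : X}
    (hR' : 0 < R') (F : (ℕ → X) → (ℕ → X))
    (hpo : ∀ p, IsPseudoOrbit f δ n x₀ p → IsPseudoOrbit g δ' m x₀ (F p))
    (hsep : ∀ p q, IsPseudoOrbit f δ n x₀ p → IsPseudoOrbit f δ n x₀ q →
      R ≤ orbitDist n p q → R' ≤ orbitDist m (F p) (F q)) :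
    sepCard f n R δ x₀ ≤ sepCard g m R' δ' x₀ := by
  refine iSup_le fun S => iSup_le fun hS => iSup_le fun hsepS => ?_
  have hinj : Set.InjOn F S := by
    intro p hp q hq hpq
    by_contra hne
    have h1 := hsep p q (hS p hp) (hS q hq) (hsepS p hp q hq hne)
    rw [hpq, orbitDist_self] at h1
    linarith
  have hpo' : ∀ p ∈ F '' S, IsPseudoOrbit g δ' m x₀ p := by
    rintro _ ⟨p, hp, rfl⟩
    exact hpo p (hS p hp)
  have hsep' : IsSepFamily m R' (F '' S) := by
    rintro _ ⟨p, hp, rfl⟩ _ ⟨q, hq, rfl⟩ hne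
    have hpq : p ≠ q := fun h => hne (by rw [h])
    exact hsep p q (hS p hp) (hS q hq) (hsepS p hp q hq hpq)
  calc (S.encard : ℝ≥0∞) = ((F '' S).encard : ℝ≥0∞) := by rw [hinj.encard_image]
    _ ≤ sepCard g m R' δ' x₀ := by
        refine le_iSup_of_le (F '' S) ?_
        rw [iSup_pos hpo', iSup_pos hsep']

private lemma sepCard_le_succ {x₀ : X} {R δ : ℝ} (hR : 0 < R) (hδ : 0 ≤ δ) (n : ℕ) :
    sepCard (id : X → X) n R δ x₀ ≤ sepCard id (n + 1) R δ x₀ := by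
  refine sepCard_map_le hR (fun p i => p (min i n)) ?_ ?_
  · rintro p ⟨h0, hstep⟩
    refine ⟨by simpa using h0, fun i hi => ?_⟩
    rcases lt_or_ge i n with h | h
    · have h1 : min i n = i := min_eq_left h.le
      have h2 : min (i + 1) n = i + 1 := min_eq_left h
      simpa only [id_eq, h1, h2] using hstep i h
    · have hi' : i = n := by omega
      subst hi'
      simp [hδ]
  · intro p q _ _ h
    refine le_trans h ?_
    unfold orbitDist
    apply Finset.sup'_le
    intro i hi
    simp only [Finset.mem_range] at hi
    have h1 : min i n = i := min_eq_left (by omega)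
    refine le_trans ?_ (Finset.le_sup' _ (Finset.mem_range.mpr (by omega : i < n + 1 + 1)))
    simp [h1]

private lemma sepCard_id_mono {x₀ : X} {R δ : ℝ} (hR : 0 < R) (hδ : 0 ≤ δ) :
    Monotone fun n => sepCard (id : X → X) n R δ x₀ :=
  monotone_nat_of_le_succ fun n => sepCard_le_succ hR hδ n

private lemma sepCard_two_mul_le {x₀ : X} {R' δ : ℝ} (hR' : 0 < R') (hδ : 0 ≤ δ) (n : ℕ) :
    sepCard (id : X → X) (2 * n) (R' + 2 * δ) δ x₀ ≤ sepCard id n R' (2 * δ) x₀ := by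
  refine sepCard_map_le hR' (fun p i => p (2 * i)) ?_ ?_
  · rintro p ⟨h0, hstep⟩
    refine ⟨by simpa using h0, fun i hi => ?_⟩
    have h1 := hstep (2 * i) (by omega)
    have h2 := hstep (2 * i + 1) (by omega)
    simp only [id_eq] at h1 h2 ⊢
    have h3 : 2 * (i + 1) = 2 * i + 1 + 1 := by ring
    rw [h3]
    calc dist (p (2 * i)) (p (2 * i + 1 + 1))
        ≤ dist (p (2 * i)) (p (2 * i + 1)) + dist (p (2 * i + 1)) (p (2 * i + 1 + 1)) :=
          dist_triangle _ _ _
      _ ≤ 2 * δ := by linarith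
  · intro p q hp hq h
    unfold orbitDist at h ⊢
    rw [Finset.le_sup'_iff] at h
    obtain ⟨j, hj, hdist⟩ := h
    simp only [Finset.mem_range] at hj
    set i := j / 2 with hi
    have hij : j = 2 * i ∨ j = 2 * i + 1 := by omega
    have hin : i < n + 1 := by omega
    have hpj : dist (p j) (p (2 * i)) ≤ δ := by
      rcases hij with h' | h'
      · simp [h', hδ]
      · have := hp.2 (2 * i) (by omega)
        simp only [id_eq] at this
        rw [h', dist_comm]
        exact this
    have hqj : dist (q j) (q (2 * i)) ≤ δ := by
      rcases hij with h' | h'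
      · simp [h', hδ]
      · have := hq.2 (2 * i) (by omega)
        simp only [id_eq] at this
        rw [h', dist_comm]
        exact this
    refine le_trans ?_ (Finset.le_sup' _ (Finset.mem_range.mpr hin))
    have h4 : dist (p j) (q j) ≤
        dist (p j) (p (2 * i)) + dist (p (2 * i)) (q (2 * i)) + dist (q (2 * i)) (q j) :=
      dist_triangle4 _ _ _ _
    have h5 : dist (q (2 * i)) (q j) = dist (q j) (q (2 * i)) := dist_comm _ _
    simp only []
    linarith

end Aux

private lemma nat_inv_le_aux {m k n : ℕ} (hm : 0 < m) (hk : 0 < k) (hn : 0 < n)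
    (h : k * n ≤ (k + 1) * m) :
    ((m : ℝ≥0∞))⁻¹ ≤ ((k : ℝ≥0∞) + 1) / k * ((n : ℝ≥0∞))⁻¹ := by
  have hm0 : (m : ℝ≥0∞) ≠ 0 := by exact_mod_cast hm.ne'
  have hk0 : (k : ℝ≥0∞) ≠ 0 := by exact_mod_cast hk.ne'
  have hn0 : (n : ℝ≥0∞) ≠ 0 := by exact_mod_cast hn.ne'
  have hkn0 : (k : ℝ≥0∞) * n ≠ 0 := mul_ne_zero hk0 hn0
  have hknt : (k : ℝ≥0∞) * n ≠ ⊤ := ENNReal.mul_ne_top (ENNReal.natCast_ne_top k)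
    (ENNReal.natCast_ne_top n)
  have e1 : ((k : ℝ≥0∞) + 1) / k * ((n : ℝ≥0∞))⁻¹ = ((k : ℝ≥0∞) + 1) / ((k : ℝ≥0∞) * n) := by
    rw [div_eq_mul_inv, mul_assoc, ← ENNReal.mul_inv (Or.inl hk0) (Or.inr hn0), div_eq_mul_inv]
  rw [e1, ← one_div]
  rw [ENNReal.le_div_iff_mul_le (Or.inl hkn0) (Or.inl hknt)]
  rw [mul_comm, mul_one_div, ENNReal.div_le_iff_le_mul (Or.inl hm0)
    (Or.inl (ENNReal.natCast_ne_top m))]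
  have : ((k * n : ℕ) : ℝ≥0∞) ≤ (((k + 1) * m : ℕ) : ℝ≥0∞) := by exact_mod_cast h
  push_cast at this
  convert this using 1

private lemma limsup_double_le {a c : ℕ → ℝ≥0∞} (ha : Monotone a)
    (h : ∀ n, a (2 * n) ≤ c n) :
    2 * Filter.atTop.limsup (fun m : ℕ => a m / (m : ℝ≥0∞)) ≤
      Filter.atTop.limsup (fun n : ℕ => c n / (n : ℝ≥0∞)) := by
  set v : ℕ → ℝ≥0∞ := fun n => a (2 * n) / ((2 * n : ℕ) : ℝ≥0∞) with hv
  have hv2 : 2 * Filter.atTop.limsup v ≤ Filter.atTop.limsup (fun n : ℕ => c n / (n : ℝ≥0∞)) := by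
    rw [← ENNReal.limsup_const_mul_of_ne_top (ENNReal.ofNat_ne_top)]
    refine Filter.limsup_le_limsup ?_
    filter_upwards [Filter.eventually_ge_atTop 1] with n hn
    have hcast : ((2 * n : ℕ) : ℝ≥0∞) = 2 * (n : ℝ≥0∞) := by push_cast; ring
    have e : 2 * v n = a (2 * n) / (n : ℝ≥0∞) := by
      rw [hv]; dsimp only
      rw [hcast, ← mul_div_assoc, ENNReal.mul_div_mul_left _ _ two_ne_zero ENNReal.ofNat_ne_top]
    rw [e]
    exact ENNReal.div_le_div_right (h n) _
  refine le_trans (mul_le_mul_right ?_ 2) hv2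
  by_cases hS : Filter.atTop.limsup v = ⊤
  · rw [hS]; exact le_top
  have hmap : Filter.Tendsto (fun m : ℕ => (m + 1) / 2) Filter.atTop Filter.atTop :=
    Filter.tendsto_atTop_atTop.mpr fun b => ⟨2 * b, fun m hm => by omega⟩
  have key : ∀ k : ℕ, 1 ≤ k →
      Filter.atTop.limsup (fun m : ℕ => a m / (m : ℝ≥0∞)) ≤
        (((k : ℝ≥0∞) + 1) / k) * Filter.atTop.limsup v := by
    intro k hk
    have hk0 : (k : ℝ≥0∞) ≠ 0 := Nat.cast_ne_zero.mpr (by omega)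
    have hco : ((k : ℝ≥0∞) + 1) / k ≠ ⊤ := by
      simp [ENNReal.div_eq_top, hk0, ENNReal.natCast_ne_top]
    have step1 : Filter.atTop.limsup (fun m : ℕ => a m / (m : ℝ≥0∞)) ≤
        Filter.atTop.limsup (fun m : ℕ => (((k : ℝ≥0∞) + 1) / k) * v ((m + 1) / 2)) := by
      refine Filter.limsup_le_limsup ?_
      filter_upwards [Filter.eventually_ge_atTop (max 1 k)] with m hm
      have hm1 : 1 ≤ m := le_trans (le_max_left _ _) hm
      have hmk : k ≤ m := le_trans (le_max_right _ _) hm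
      set n := (m + 1) / 2 with hn
      have h1 : m ≤ 2 * n := by omega
      have h2 : 2 * n ≤ m + 1 := by omega
      have h3 : 0 < n := by omega
      have hmul : k * (2 * n) ≤ (k + 1) * m := by nlinarith
      calc a m / (m : ℝ≥0∞) ≤ a (2 * n) / (m : ℝ≥0∞) := ENNReal.div_le_div_right (ha h1) _
        _ ≤ (((k : ℝ≥0∞) + 1) / k) * v n := by
            rw [hv]; dsimp only
            rw [div_eq_mul_inv (a (2 * n)) ((m : ℕ) : ℝ≥0∞),
              div_eq_mul_inv (a (2 * n)) ((2 * n : ℕ) : ℝ≥0∞), mul_left_comm]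
            exact mul_le_mul_right (nat_inv_le_aux (by omega) (by omega) (by omega) hmul) _
    refine le_trans step1 ?_
    rw [ENNReal.limsup_const_mul_of_ne_top hco]
    refine mul_le_mul_right ?_ _
    have hcomp : Filter.atTop.limsup (fun m : ℕ => v ((m + 1) / 2)) =
        Filter.limsup v (Filter.map (fun m : ℕ => (m + 1) / 2) Filter.atTop) :=
      Filter.limsup_comp v _ _
    rw [hcomp]
    exact Filter.limsup_le_limsup_of_le hmap
  have h1 : Filter.Tendsto (fun k : ℕ => ((k : ℝ≥0∞) + 1) / k) Filter.atTop (nhds 1) := by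
    have he : ∀ᶠ k : ℕ in Filter.atTop, 1 + ((k : ℝ≥0∞))⁻¹ = ((k : ℝ≥0∞) + 1) / k := by
      filter_upwards [Filter.eventually_ge_atTop 1] with k hk
      have hk0 : (k : ℝ≥0∞) ≠ 0 := Nat.cast_ne_zero.mpr (by omega)
      rw [ENNReal.add_div, ENNReal.div_self hk0 (ENNReal.natCast_ne_top k), one_div, add_comm]
    refine Filter.Tendsto.congr' he ?_
    have := Filter.Tendsto.const_add (1 : ℝ≥0∞) ENNReal.tendsto_inv_nat_nhds_zero
    simpa using this
  have htend : Filter.Tendsto (fun k : ℕ => (((k : ℝ≥0∞) + 1) / k) * Filter.atTop.limsup v)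
      Filter.atTop (nhds (Filter.atTop.limsup v)) := by
    have := ENNReal.Tendsto.mul_const (b := Filter.atTop.limsup v) h1 (Or.inl one_ne_zero)
    simpa using this
  exact ge_of_tendsto htend
    (by filter_upwards [Filter.eventually_ge_atTop 1] with k hk using key k hk)

section Main
variable {X : Type*} [MetricSpace X]

private noncomputable def Lf (x₀ : X) (δ : ℝ) : ℝ≥0∞ :=
  ⨅ (R : ℝ) (_ : 0 < R),
    Filter.atTop.limsup fun n : ℕ => elog (sepCard (id : X → X) n R δ x₀) / (n : ℝ≥0∞)

private lemma Lf_double {x₀ : X} {δ : ℝ} (hδ : 0 < δ) : 2 * Lf x₀ δ ≤ Lf x₀ (2 * δ) := by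
  refine le_iInf fun R' => le_iInf fun hR' => ?_
  have hmono : Monotone fun n => elog (sepCard (id : X → X) n (R' + 2 * δ) δ x₀) :=
    elog_mono.comp (sepCard_id_mono (by linarith) hδ.le)
  have hsub : ∀ n, elog (sepCard (id : X → X) (2 * n) (R' + 2 * δ) δ x₀) ≤
      elog (sepCard (id : X → X) n R' (2 * δ) x₀) :=
    fun n => elog_mono (sepCard_two_mul_le hR' hδ.le n)
  have hmain := limsup_double_le hmono hsub
  refine le_trans ?_ hmain
  apply mul_le_mul_right
  exact iInf₂_le (R' + 2 * δ) (by linarith)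

end Main

/-- The coarse entropy of any metric space is either zero or infinity. -/
theorem coarseEntropy_zero_or_top {X : Type*} [MetricSpace X] (x₀ : X) :
    coarseEntropyAt (id : X → X) x₀ = 0 ∨ coarseEntropyAt (id : X → X) x₀ = ⊤ := by
  rcases eq_or_ne (coarseEntropyAt (id : X → X) x₀) 0 with h0 | h0
  · exact Or.inl h0
  right
  have hE : coarseEntropyAt (id : X → X) x₀ = ⨆ (δ : ℝ) (_ : 0 < δ), Lf x₀ δ := rfl
  have hex : ∃ δ₀ : ℝ, 0 < δ₀ ∧ Lf x₀ δ₀ ≠ 0 := by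
    by_contra hc
    push_neg at hc
    apply h0
    rw [hE]
    refine le_antisymm (iSup_le fun δ => iSup_le fun hδ => ?_) zero_le
    rw [hc δ hδ]
  obtain ⟨δ₀, hδ₀, hL⟩ := hex
  have hk : ∀ k : ℕ, 2 ^ k * Lf x₀ δ₀ ≤ Lf x₀ (2 ^ k * δ₀) := by
    intro k
    induction k with
    | zero => simp
    | succ k ih =>
      have h2 : 2 * Lf x₀ (2 ^ k * δ₀) ≤ Lf x₀ (2 * (2 ^ k * δ₀)) :=
        Lf_double (by positivity)
      have e1 : (2 : ℝ) * (2 ^ k * δ₀) = 2 ^ (k + 1) * δ₀ := by ring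
      calc (2 : ℝ≥0∞) ^ (k + 1) * Lf x₀ δ₀ = 2 * (2 ^ k * Lf x₀ δ₀) := by ring
        _ ≤ 2 * Lf x₀ (2 ^ k * δ₀) := mul_le_mul_right ih 2
        _ ≤ Lf x₀ (2 * (2 ^ k * δ₀)) := h2
        _ = Lf x₀ (2 ^ (k + 1) * δ₀) := by rw [e1]
  have hEk : ∀ k : ℕ, 2 ^ k * Lf x₀ δ₀ ≤ coarseEntropyAt (id : X → X) x₀ := by
    intro k
    refine (hk k).trans ?_
    rw [hE]
    exact le_iSup₂ (f := fun δ (_ : 0 < δ) => Lf x₀ δ) (2 ^ k * δ₀) (by positivity)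
  rw [eq_top_iff]
  have htop : (⨆ k : ℕ, (2 : ℝ≥0∞) ^ k) = ⊤ := by
    rw [eq_top_iff, ← ENNReal.iSup_natCast]
    refine iSup_le fun k => le_iSup_of_le k ?_
    have hn : k ≤ 2 ^ k := Nat.le_of_lt ((Nat.lt_two_pow_self (n := k)))
    exact_mod_cast Nat.cast_le.mpr hn
  calc (⊤ : ℝ≥0∞) = ⊤ * Lf x₀ δ₀ := (ENNReal.top_mul hL).symm
    _ = (⨆ k : ℕ, (2 : ℝ≥0∞) ^ k) * Lf x₀ δ₀ := by rw [htop]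
    _ = ⨆ k : ℕ, (2 : ℝ≥0∞) ^ k * Lf x₀ δ₀ := ENNReal.iSup_mul _ _
    _ ≤ _ := iSup_le hEk
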